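/- Let b₀, b₁, b₂, c ∈ ℂ be nonzero and set q = (b₀b₁b₂)⁻¹. Define ρ(x,y) = (1/y, cx/y), the reflection w_{α₂} with parameter β by (x,y) ↦ (βx(y−1)/(βy−1), βy), and the reflection w_{α₁} with parameter γ by (x,y) ↦ (x/γ, y(x−1)/(x−γ)). Then for all (x,y) at which every denominator occurring is nonzero, the composition w_{α₁} (with γ = b₀b₂) ∘ w_{α₂} (with β = b₀) ∘ ρ maps (x,y) to ((cx−y)/(b₂y(b₀cx−y)), cx(b₀(cx−y)−y(b₀cx−y))/(y((cx−y)−b₂y(b₀cx−y)))), and the accompanying parameter action is (b₀,b₁,b₂,c) ↦ (b₀²b₁b₂, 1/(b₀b₂), b₂, c) = (b₀/q, b₁q, b₂, c); i.e., w_{α₁}∘w_{α₂}∘ρ is the qP_III equation. -/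

import Mathlib

open Complex

/-- The rotation `ρ`: `(x,y) ↦ (1/y, cx/y)`. -/
noncomputable def rho (c : ℂ) (p : ℂ × ℂ) : ℂ × ℂ :=
  (1 / p.2, c * p.1 / p.2)

/-- The reflection `w_{α₂}` with parameter `β`: `(x,y) ↦ (βx(y−1)/(βy−1), βy)`. -/
noncomputable def wAlpha2 (β : ℂ) (p : ℂ × ℂ) : ℂ × ℂ :=
  (β * p.1 * (p.2 - 1) / (β * p.2 - 1), β * p.2)

/-- The reflection `w_{α₁}` with parameter `γ`: `(x,y) ↦ (x/γ, y(x−1)/(x−γ))`. -/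
noncomputable def wAlpha1 (γ : ℂ) (p : ℂ × ℂ) : ℂ × ℂ :=
  (p.1 / γ, p.2 * (p.1 - 1) / (p.1 - γ))

theorem stmt_17 (b₀ b₁ b₂ c x y : ℂ)
    (hb₀ : b₀ ≠ 0) (hb₁ : b₁ ≠ 0) (hb₂ : b₂ ≠ 0) (hc : c ≠ 0)
    (q : ℂ) (hq : q = (b₀ * b₁ * b₂)⁻¹)
    (hy : y ≠ 0)
    (h2 : b₀ * (rho c (x, y)).2 - 1 ≠ 0)
    (h3 : (wAlpha2 b₀ (rho c (x, y))).1 - b₀ * b₂ ≠ 0)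
    (hd1 : b₂ * y * (b₀ * c * x - y) ≠ 0)
    (hd2 : y * ((c * x - y) - b₂ * y * (b₀ * c * x - y)) ≠ 0) :
    wAlpha1 (b₀ * b₂) (wAlpha2 b₀ (rho c (x, y))) =
      ((c * x - y) / (b₂ * y * (b₀ * c * x - y)),
       c * x * (b₀ * (c * x - y) - y * (b₀ * c * x - y)) /
         (y * ((c * x - y) - b₂ * y * (b₀ * c * x - y)))) ∧
    ((b₀ ^ 2 * b₁ * b₂, 1 / (b₀ * b₂), b₂, c) : ℂ × ℂ × ℂ × ℂ) =
      (b₀ / q, b₁ * q, b₂, c) := by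
  constructor
  · simp only [rho, wAlpha1, wAlpha2] at *
    have h2' : b₀ * (c * x / y) - 1 ≠ 0 := h2
    have h3' : b₀ * (1 / y) * (c * x / y - 1) / (b₀ * (c * x / y) - 1) - b₀ * b₂ ≠ 0 := h3
    have hden1 : b₀ * c * x - y ≠ 0 := fun h => by
      apply h2'; field_simp; linear_combination h
    have hden2 : (c * x - y) - b₂ * y * (b₀ * c * x - y) ≠ 0 :=
      (mul_ne_zero_iff.mp hd2).2
    have h3'' : b₀ * (c * x - y) - b₀ * b₂ * y * (b₀ * c * x - y) ≠ 0 := by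
      intro h
      apply h3'
      rw [div_sub' h2', div_eq_zero_iff]
      left
      field_simp
      linear_combination h
    have hyA : y * (b₀ * c * x - y) ≠ 0 := mul_ne_zero hy hden1
    have hA : b₀ * (1 / y) * (c * x / y - 1) / (b₀ * (c * x / y) - 1) =
        b₀ * (c * x - y) / (y * (b₀ * c * x - y)) := by
      rw [div_eq_div_iff h2' hyA]
      field_simp
    rw [Prod.ext_iff]
    simp only [hA]
    constructor
    · rw [div_div, div_eq_div_iff (mul_ne_zero hyA (mul_ne_zero hb₀ hb₂)) hd1]
      ring_nf
    · have hnum : b₀ * (c * x - y) / (y * (b₀ * c * x - y)) - b₀ * b₂ =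
          (b₀ * (c * x - y) - b₀ * b₂ * y * (b₀ * c * x - y)) / (y * (b₀ * c * x - y)) := by
        field_simp
      rw [hnum, div_div_eq_mul_div, div_eq_div_iff h3'' hd2]
      field_simp
  · rw [hq]
    refine Prod.ext ?_ (Prod.ext ?_ rfl)
    · field_simp
    · simp only []
      field_simp
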